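/- arXiv:2101.04991 — 2 statements merged into one kernel-verified Lean document; each statement's English description precedes it below -/
import Mathlib

section
/- Fine's symmetry transformation: F(a,b;t;q) = (1−b)/(1−t) · F(at/b, t; b; q) for |q|<1 and suitable parameters, where F(a,b;t;q) = Σ_{n≥0} (aq;q)_n/(bq;q)_n · t^n. -/
open Complex

/-- The q-Pochhammer symbol `(a;q)_n = ∏_{j=0}^{n-1} (1 - a q^j)`. -/
noncomputable def qPoch (a q : ℂ) (n : ℕ) : ℂ := ∏ j ∈ Finset.range n, (1 - a * q ^ j)

/-- Fine's function `F(a,b;t;q) = Σ_{n≥0} (aq;q)_n/(bq;q)_n · t^n`. -/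
noncomputable def fineF (a b t q : ℂ) : ℂ :=
  ∑' n : ℕ, qPoch (a * q) q n / qPoch (b * q) q n * t ^ n

open Finset Filter

/-- Weierstrass product inequality. -/
lemma weier (g : ℕ → ℝ) (h0 : ∀ j, 0 ≤ g j) (h1 : ∀ j, g j ≤ 1) (n : ℕ) :
    1 - ∑ j ∈ range n, g j ≤ ∏ j ∈ range n, (1 - g j) := by
  induction n with
  | zero => simp
  | succ n ih =>
    rw [prod_range_succ, sum_range_succ]
    have hprod : 0 ≤ ∏ j ∈ range n, (1 - g j) :=
      prod_nonneg fun j _ => by linarith [h1 j]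
    have hsum : 0 ≤ ∑ j ∈ range n, g j := sum_nonneg fun j _ => h0 j
    nlinarith [h0 n, h1 n]

/-- Uniform upper bound for q-Pochhammer norms. -/
lemma qPoch_norm_le (x q : ℂ) (hq1 : ‖q‖ < 1) (n : ℕ) :
    ‖qPoch x q n‖ ≤ Real.exp (‖x‖ * (1 - ‖q‖)⁻¹) := by
  have hq0 : (0:ℝ) ≤ ‖q‖ := norm_nonneg q
  calc ‖qPoch x q n‖ = ∏ j ∈ range n, ‖1 - x * q ^ j‖ := by
        rw [qPoch]; exact norm_prod _ _
    _ ≤ ∏ j ∈ range n, Real.exp (‖x‖ * ‖q‖ ^ j) := by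
        refine prod_le_prod (fun j _ => norm_nonneg _) (fun j _ => ?_)
        calc ‖1 - x * q ^ j‖ ≤ ‖(1:ℂ)‖ + ‖x * q ^ j‖ := norm_sub_le _ _
          _ = 1 + ‖x‖ * ‖q‖ ^ j := by rw [norm_one, norm_mul, norm_pow]
          _ ≤ Real.exp (‖x‖ * ‖q‖ ^ j) := by
              have := Real.add_one_le_exp (‖x‖ * ‖q‖ ^ j); linarith
    _ = Real.exp (∑ j ∈ range n, ‖x‖ * ‖q‖ ^ j) := by rw [Real.exp_sum]
    _ ≤ Real.exp (‖x‖ * (1 - ‖q‖)⁻¹) := by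
        apply Real.exp_le_exp.mpr
        rw [← mul_sum]
        refine mul_le_mul_of_nonneg_left ?_ (norm_nonneg x)
        exact Summable.sum_le_tsum (range n) (fun i _ => by positivity)
          (summable_geometric_of_lt_one hq0 hq1) |>.trans
          (tsum_geometric_of_lt_one hq0 hq1).le

lemma qPoch_ne_zero (y q : ℂ) (h : ∀ m : ℕ, 1 ≤ m → y * q ^ m ≠ 1) (n : ℕ) :
    qPoch (y * q) q n ≠ 0 := by
  rw [qPoch]
  refine prod_ne_zero_iff.mpr fun j _ => ?_
  rw [sub_ne_zero]
  intro hcon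
  exact h (j+1) (Nat.succ_le_succ (Nat.zero_le j)) (by rw [pow_succ']; linear_combination -hcon)

/-- Uniform positive lower bound for `‖qPoch (y*q) q n‖`. -/
lemma qPoch_norm_lower (y q : ℂ) (hq1 : ‖q‖ < 1) (hy : ‖y‖ < 1)
    (h : ∀ m : ℕ, 1 ≤ m → y * q ^ m ≠ 1) :
    ∃ δ : ℝ, 0 < δ ∧ ∀ n, δ ≤ ‖qPoch (y * q) q n‖ := by
  have hq0 : (0:ℝ) ≤ ‖q‖ := norm_nonneg q
  have hy0 : (0:ℝ) ≤ ‖y‖ := norm_nonneg y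
  -- choose J with tail sum ≤ 1/2
  obtain ⟨J, hJ⟩ : ∃ J : ℕ, ‖y‖ * ‖q‖ ^ (J+1) * (1 - ‖q‖)⁻¹ ≤ 1/2 := by
    have htend : Tendsto (fun n : ℕ => ‖y‖ * ‖q‖ ^ (n+1) * (1 - ‖q‖)⁻¹) atTop (nhds 0) := by
      have h1 : Tendsto (fun n : ℕ => ‖q‖ ^ n) atTop (nhds 0) :=
        tendsto_pow_atTop_nhds_zero_of_lt_one hq0 hq1
      have := ((h1.comp (tendsto_add_atTop_nat 1)).const_mul ‖y‖).mul_const (1 - ‖q‖)⁻¹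
      simpa using this
    obtain ⟨J, hJ⟩ := (htend.eventually (eventually_le_nhds (by norm_num : (0:ℝ) < 1/2))).exists
    exact ⟨J, hJ⟩
  -- tail products are ≥ 1/2
  have htail : ∀ k m : ℕ, J ≤ m → (1:ℝ)/2 ≤ ∏ j ∈ range k, ‖1 - (y*q) * q ^ (m + j)‖ := by
    intro k m hm
    have hgle : ∀ j : ℕ, ‖y‖ * ‖q‖ ^ (m + j + 1) ≤ 1 := fun j => by
      have h1 : ‖q‖ ^ (m + j + 1) ≤ 1 := pow_le_one₀ hq0 hq1.le
      nlinarith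
    have hg0 : ∀ j : ℕ, 0 ≤ ‖y‖ * ‖q‖ ^ (m + j + 1) := fun j => by positivity
    have hW := weier (fun j => ‖y‖ * ‖q‖ ^ (m + j + 1)) hg0 hgle k
    have hsum : ∑ j ∈ range k, ‖y‖ * ‖q‖ ^ (m + j + 1) ≤ 1/2 := by
      have : ∀ j ∈ range k, ‖y‖ * ‖q‖ ^ (m + j + 1) ≤ ‖y‖ * ‖q‖^(J+1) * ‖q‖ ^ j := by
        intro j _
        have : ‖q‖ ^ (m + j + 1) ≤ ‖q‖ ^ (J + 1) * ‖q‖ ^ j := by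
          rw [← pow_add]
          exact pow_le_pow_of_le_one hq0 hq1.le (by omega)
        nlinarith
      calc ∑ j ∈ range k, ‖y‖ * ‖q‖ ^ (m + j + 1)
          ≤ ∑ j ∈ range k, ‖y‖ * ‖q‖^(J+1) * ‖q‖ ^ j := sum_le_sum this
        _ = ‖y‖ * ‖q‖^(J+1) * ∑ j ∈ range k, ‖q‖ ^ j := by rw [mul_sum]
        _ ≤ ‖y‖ * ‖q‖^(J+1) * (1 - ‖q‖)⁻¹ := by
            refine mul_le_mul_of_nonneg_left ?_ (by positivity)
            exact Summable.sum_le_tsum (range k) (fun i _ => by positivity)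
              (summable_geometric_of_lt_one hq0 hq1) |>.trans
              (tsum_geometric_of_lt_one hq0 hq1).le
        _ ≤ 1/2 := hJ
    calc (1:ℝ)/2 ≤ 1 - ∑ j ∈ range k, ‖y‖ * ‖q‖ ^ (m + j + 1) := by linarith
      _ ≤ ∏ j ∈ range k, (1 - ‖y‖ * ‖q‖ ^ (m + j + 1)) := hW
      _ ≤ ∏ j ∈ range k, ‖1 - (y*q) * q ^ (m + j)‖ := by
          refine prod_le_prod (fun j _ => by linarith [hgle j, hg0 j]) (fun j _ => ?_)
          have h2 : ‖(y*q) * q ^ (m+j)‖ = ‖y‖ * ‖q‖ ^ (m + j + 1) := by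
            rw [norm_mul, norm_mul, norm_pow]; ring
          calc 1 - ‖y‖ * ‖q‖ ^ (m + j + 1) = 1 - ‖(y*q) * q ^ (m+j)‖ := by rw [h2]
            _ ≤ ‖1 - (y*q) * q ^ (m + j)‖ := by
                have := norm_sub_norm_le (1:ℂ) ((y*q) * q ^ (m+j))
                simpa using this
  -- min over n ≤ J
  set m0 : ℝ := ((range (J+1)).image fun n => ‖qPoch (y*q) q n‖).min'
    (by simp) with hm0
  have hm0pos : 0 < m0 := by
    rw [hm0]
    apply lt_min'_iff _ _ |>.mpr
    intro x hx
    simp only [mem_image, mem_range] at hx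
    obtain ⟨n, _, rfl⟩ := hx
    exact norm_pos_iff.mpr (qPoch_ne_zero y q h n)
  have hm0le : ∀ n ≤ J, m0 ≤ ‖qPoch (y*q) q n‖ := by
    intro n hn
    apply min'_le
    exact mem_image.mpr ⟨n, mem_range.mpr (by omega), rfl⟩
  refine ⟨m0/2, by linarith, fun n => ?_⟩
  rcases le_or_gt n J with hn | hn
  · linarith [hm0le n hn]
  · obtain ⟨k, rfl⟩ : ∃ k, n = J + k := ⟨n - J, by omega⟩
    have : qPoch (y*q) q (J + k) = qPoch (y*q) q J * ∏ j ∈ range k, (1 - (y*q) * q ^ (J + j)) := by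
      rw [qPoch, qPoch, prod_range_add]
    rw [this, norm_mul, norm_prod]
    have h1 : m0 ≤ ‖qPoch (y*q) q J‖ := hm0le J le_rfl
    have h2 : (1:ℝ)/2 ≤ ∏ j ∈ range k, ‖1 - (y*q) * q ^ (J + j)‖ := htail k J le_rfl
    nlinarith [norm_nonneg (qPoch (y*q) q J)]

/-- Summability of Fine-type series. -/
lemma fine_summable (x y s q : ℂ) (hq1 : ‖q‖ < 1) (hy : ‖y‖ < 1)
    (hyne : ∀ m : ℕ, 1 ≤ m → y * q ^ m ≠ 1) (hs : ‖s‖ < 1) :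
    Summable (fun n => qPoch x q n / qPoch (y * q) q n * s ^ n) := by
  obtain ⟨δ, hδ, hlow⟩ := qPoch_norm_lower y q hq1 hy hyne
  refine Summable.of_norm_bounded
    (g := fun n => (Real.exp (‖x‖ * (1 - ‖q‖)⁻¹) / δ) * ‖s‖ ^ n) ?_ ?_
  · exact (summable_geometric_of_lt_one (norm_nonneg s) hs).mul_left _
  · intro n
    rw [norm_mul, norm_div, norm_pow]
    refine mul_le_mul_of_nonneg_right ?_ (by positivity)
    exact div_le_div₀ (Real.exp_nonneg _) (qPoch_norm_le x q hq1 n) hδ (hlow n)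

/-- Uniform bound on Fine-type tsums. -/
lemma fine_tsum_norm_le (x y s q : ℂ) (r : ℝ) (hq1 : ‖q‖ < 1) (hy : ‖y‖ < 1)
    (hyne : ∀ m : ℕ, 1 ≤ m → y * q ^ m ≠ 1) (δ : ℝ) (hδ : 0 < δ)
    (hlow : ∀ n, δ ≤ ‖qPoch (y*q) q n‖) (hs : ‖s‖ ≤ r) (hr : r < 1) :
    ‖∑' n : ℕ, qPoch x q n / qPoch (y * q) q n * s ^ n‖ ≤
      Real.exp (‖x‖ * (1 - ‖q‖)⁻¹) / δ * (1 - r)⁻¹ := by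
  have hr0 : (0:ℝ) ≤ r := le_trans (norm_nonneg s) hs
  have hbound : ∀ n : ℕ, ‖qPoch x q n / qPoch (y * q) q n * s ^ n‖ ≤
      Real.exp (‖x‖ * (1 - ‖q‖)⁻¹) / δ * r ^ n := by
    intro n
    rw [norm_mul, norm_div, norm_pow]
    have h1 : ‖s‖ ^ n ≤ r ^ n := pow_le_pow_left₀ (norm_nonneg s) hs n
    have h2 : ‖qPoch x q n‖ / ‖qPoch (y*q) q n‖ ≤ Real.exp (‖x‖ * (1 - ‖q‖)⁻¹) / δ :=
      div_le_div₀ (Real.exp_nonneg _) (qPoch_norm_le x q hq1 n) hδ (hlow n)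
    have h3 : (0:ℝ) ≤ ‖qPoch x q n‖ / ‖qPoch (y*q) q n‖ := by positivity
    nlinarith [pow_nonneg (norm_nonneg s) n, pow_nonneg hr0 n]
  calc ‖∑' n : ℕ, qPoch x q n / qPoch (y * q) q n * s ^ n‖
      ≤ ∑' n : ℕ, Real.exp (‖x‖ * (1 - ‖q‖)⁻¹) / δ * r ^ n :=
        tsum_of_norm_bounded (((summable_geometric_of_lt_one hr0 hr).mul_left _).hasSum) hbound
    _ = Real.exp (‖x‖ * (1 - ‖q‖)⁻¹) / δ * ∑' n : ℕ, r ^ n := tsum_mul_left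
    _ ≤ Real.exp (‖x‖ * (1 - ‖q‖)⁻¹) / δ * (1 - r)⁻¹ := by
        rw [tsum_geometric_of_lt_one hr0 hr]

/-- Fine's functional equation (the `t → tq` contiguous relation). -/
lemma fine_funceq (q a b : ℂ) (hq1 : ‖q‖ < 1) (hb1 : ‖b‖ < 1)
    (hb : ∀ m : ℕ, 1 ≤ m → b * q ^ m ≠ 1) (s : ℂ) (hs : ‖s‖ < 1) :
    (1 - s) * fineF a b s q = (1 - b) + (b - a * s * q) * fineF a b (s * q) q := by
  have hsq : ‖s * q‖ < 1 := by
    rw [norm_mul]; nlinarith [norm_nonneg s, norm_nonneg q]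
  have hcne : ∀ n, qPoch (b*q) q n ≠ 0 := qPoch_ne_zero b q hb
  set c : ℕ → ℂ := fun n => qPoch (a*q) q n / qPoch (b*q) q n with hc
  have hrec : ∀ n : ℕ, (1 - b*q^(n+1)) * c (n+1) = (1 - a*q^(n+1)) * c n := by
    intro n
    have h1 : qPoch (a*q) q (n+1) = qPoch (a*q) q n * (1 - a * q^(n+1)) := by
      rw [qPoch, qPoch, Finset.prod_range_succ, pow_succ']; ring
    have h2 : qPoch (b*q) q (n+1) = qPoch (b*q) q n * (1 - b * q^(n+1)) := by
      rw [qPoch, qPoch, Finset.prod_range_succ, pow_succ']; ring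
    have hbq : (1 : ℂ) - b*q^(n+1) ≠ 0 :=
      sub_ne_zero.mpr (fun hcon => hb (n+1) (by omega) hcon.symm)
    rw [hc]
    simp only
    rw [h1, h2]
    field_simp [hcne n]
  have hsum1 : Summable (fun n => c n * s ^ n) := by
    simpa [hc] using fine_summable (a*q) b s q hq1 hb1 hb hs
  have hsum2 : Summable (fun n => c n * (s*q) ^ n) := by
    simpa [hc] using fine_summable (a*q) b (s*q) q hq1 hb1 hb hsq
  have hA : HasSum (fun n => c n * s ^ n) (fineF a b s q) := by
    rw [fineF]; exact hsum1.hasSum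
  have hB : HasSum (fun n => c n * (s*q) ^ n) (fineF a b (s*q) q) := by
    rw [fineF]; exact hsum2.hasSum
  have hc0 : c 0 = 1 := by simp [hc, qPoch]
  have hA' : HasSum (fun n => c (n+1) * s ^ (n+1)) (fineF a b s q - 1) := by
    have h := (hasSum_nat_add_iff' (f := fun n => c n * s ^ n) 1).mpr hA
    rw [Finset.sum_range_one] at h
    simpa [hc0] using h
  have hB' : HasSum (fun n => c (n+1) * (s*q) ^ (n+1)) (fineF a b (s*q) q - 1) := by
    have h := (hasSum_nat_add_iff' (f := fun n => c n * (s*q) ^ n) 1).mpr hB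
    rw [Finset.sum_range_one] at h
    simpa [hc0] using h
  have key : (fun n : ℕ => c (n+1) * s^(n+1) - b * (c (n+1) * (s*q)^(n+1)))
      = (fun n : ℕ => s * (c n * s^n) - a*s*q * (c n * (s*q)^n)) := by
    funext n
    linear_combination s^(n+1) * hrec n
  have hL : HasSum (fun n : ℕ => c (n+1)*s^(n+1) - b * (c (n+1) * (s*q)^(n+1)))
      ((fineF a b s q - 1) - b * (fineF a b (s*q) q - 1)) := hA'.sub (hB'.mul_left b)
  have hR : HasSum (fun n : ℕ => s * (c n * s^n) - a*s*q * (c n * (s*q)^n))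
      (s * fineF a b s q - a*s*q * fineF a b (s*q) q) :=
    (hA.mul_left s).sub (hB.mul_left (a*s*q))
  rw [key] at hL
  have heq := hL.unique hR
  linear_combination heq

/-- Fine's symmetry transformation (6.3):
`F(a,b;t;q) = (1−b)/(1−t) · F(at/b, t; b; q)`. -/
theorem fine_symmetry (q a b t : ℂ) (hq0 : 0 < ‖q‖) (hq1 : ‖q‖ < 1)
    (ht : ‖t‖ < 1) (hbnorm : ‖b‖ < 1) (hb0 : b ≠ 0) (ht1 : t ≠ 1)
    (hb : ∀ m : ℕ, 1 ≤ m → b * q ^ m ≠ 1)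
    (htq : ∀ m : ℕ, 1 ≤ m → t * q ^ m ≠ 1) :
    fineF a b t q = (1 - b) / (1 - t) * fineF (a * t / b) t b q := by
  have hq0' : (0:ℝ) ≤ ‖q‖ := norm_nonneg q
  have hqle : ∀ N : ℕ, ‖q‖ ^ N ≤ 1 := fun N => pow_le_one₀ hq0' hq1.le
  have hsN : ∀ N : ℕ, ‖t * q ^ N‖ ≤ ‖t‖ := fun N => by
    rw [norm_mul, norm_pow]
    nlinarith [hqle N, norm_nonneg t, pow_nonneg hq0' N]
  have hsN1 : ∀ N : ℕ, ‖t * q ^ N‖ < 1 := fun N => lt_of_le_of_lt (hsN N) ht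
  have hTne : ∀ N, qPoch (t*q) q N ≠ 0 := qPoch_ne_zero t q htq
  -- iteration of the functional equation
  have hiter : ∀ N : ℕ, (1 - t) * fineF a b t q
      = (1 - b) * (∑ n ∈ Finset.range N, qPoch ((a*t/b)*q) q n / qPoch (t*q) q n * b ^ n)
        + qPoch ((a*t/b)*q) q N * b ^ N / qPoch (t*q) q N
          * ((1 - t*q^N) * fineF a b (t*q^N) q) := by
    intro N
    induction N with
    | zero => simp [qPoch]
    | succ N ih =>
      rw [ih, fine_funceq q a b hq1 hbnorm hb (t*q^N) (hsN1 N)]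
      have h1 : t*q^N*q = t*q^(N+1) := by ring
      have h3 : qPoch ((a*t/b)*q) q (N+1)
          = qPoch ((a*t/b)*q) q N * (1 - ((a*t/b)*q) * q ^ N) := by
        rw [qPoch, qPoch, Finset.prod_range_succ]
      have h4 : qPoch (t*q) q (N+1) = qPoch (t*q) q N * (1 - t * q ^ (N+1)) := by
        rw [qPoch, qPoch, Finset.prod_range_succ, pow_succ']; ring
      have h5 : (1:ℂ) - t*q^(N+1) ≠ 0 :=
        sub_ne_zero.mpr (fun hcon => htq (N+1) (by omega) hcon.symm)
      rw [h1, Finset.sum_range_succ, h3, h4]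
      field_simp [hTne N]
      ring
  -- convergence of the partial sums
  have hsum2 : Summable (fun n => qPoch ((a*t/b)*q) q n / qPoch (t*q) q n * b ^ n) :=
    fine_summable ((a*t/b)*q) t b q hq1 ht htq hbnorm
  have hS2 : Filter.Tendsto
      (fun N => ∑ n ∈ Finset.range N, qPoch ((a*t/b)*q) q n / qPoch (t*q) q n * b ^ n)
      Filter.atTop (nhds (fineF (a*t/b) t b q)) := by
    have h := hsum2.hasSum.tendsto_sum_nat
    rw [fineF]
    exact h
  -- the remainder term tends to zero
  obtain ⟨δ, hδ, hlowT⟩ := qPoch_norm_lower t q hq1 ht htq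
  obtain ⟨δ', hδ', hlowB⟩ := qPoch_norm_lower b q hq1 hbnorm hb
  set C : ℝ := Real.exp (‖(a*t/b)*q‖ * (1 - ‖q‖)⁻¹) with hC
  set K : ℝ := Real.exp (‖a*q‖ * (1 - ‖q‖)⁻¹) / δ' * (1 - ‖t‖)⁻¹ with hK
  have hCpos : 0 < C := Real.exp_pos _
  have hKpos : 0 ≤ K := by
    rw [hK]
    have : (0:ℝ) ≤ (1 - ‖t‖)⁻¹ := by
      rw [inv_nonneg]; linarith
    positivity
  have hE : ∀ N : ℕ, ‖qPoch ((a*t/b)*q) q N * b ^ N / qPoch (t*q) q N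
      * ((1 - t*q^N) * fineF a b (t*q^N) q)‖ ≤ (C / δ * (2 * K)) * ‖b‖ ^ N := by
    intro N
    have e1 : ‖qPoch ((a*t/b)*q) q N * b ^ N / qPoch (t*q) q N‖ ≤ C / δ * ‖b‖ ^ N := by
      rw [norm_div, norm_mul, norm_pow]
      rw [div_le_iff₀ (lt_of_lt_of_le hδ (hlowT N))]
      have := qPoch_norm_le ((a*t/b)*q) q hq1 N
      have h2 := hlowT N
      have hbn : (0:ℝ) ≤ ‖b‖ ^ N := by positivity
      calc ‖qPoch ((a*t/b)*q) q N‖ * ‖b‖ ^ N ≤ C * ‖b‖ ^ N := by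
            exact mul_le_mul_of_nonneg_right (by rw [hC]; exact this) hbn
        _ = C / δ * ‖b‖ ^ N * δ * (δ⁻¹ * δ) := by field_simp
        _ ≤ C / δ * ‖b‖ ^ N * ‖qPoch (t*q) q N‖ := by
            rw [inv_mul_cancel₀ (ne_of_gt hδ), mul_one]
            have : (0:ℝ) ≤ C / δ * ‖b‖ ^ N := by positivity
            exact mul_le_mul_of_nonneg_left h2 this
    have e2 : ‖(1:ℂ) - t*q^N‖ ≤ 2 := by
      calc ‖(1:ℂ) - t*q^N‖ ≤ ‖(1:ℂ)‖ + ‖t*q^N‖ := norm_sub_le _ _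
        _ ≤ 1 + 1 := by
            rw [norm_one]
            linarith [hsN1 N]
        _ = 2 := by norm_num
    have e3 : ‖fineF a b (t*q^N) q‖ ≤ K := by
      rw [fineF, hK]
      exact fine_tsum_norm_le (a*q) b (t*q^N) q ‖t‖ hq1 hbnorm hb δ' hδ' hlowB (hsN N) ht
    calc ‖qPoch ((a*t/b)*q) q N * b ^ N / qPoch (t*q) q N
        * ((1 - t*q^N) * fineF a b (t*q^N) q)‖
        = ‖qPoch ((a*t/b)*q) q N * b ^ N / qPoch (t*q) q N‖
          * (‖(1:ℂ) - t*q^N‖ * ‖fineF a b (t*q^N) q‖) := by rw [norm_mul, norm_mul]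
      _ ≤ (C / δ * ‖b‖ ^ N) * (2 * K) := by
          refine mul_le_mul e1 (mul_le_mul e2 e3 (norm_nonneg _) (by norm_num))
            (by positivity) (by positivity)
      _ = (C / δ * (2 * K)) * ‖b‖ ^ N := by ring
  have hE0 : Filter.Tendsto (fun N : ℕ => qPoch ((a*t/b)*q) q N * b ^ N / qPoch (t*q) q N
      * ((1 - t*q^N) * fineF a b (t*q^N) q)) Filter.atTop (nhds 0) := by
    apply squeeze_zero_norm hE
    have h := tendsto_pow_atTop_nhds_zero_of_lt_one (norm_nonneg b) hbnorm
    simpa using h.const_mul (C / δ * (2 * K))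
  -- combine
  have hfinal : Filter.Tendsto (fun N : ℕ =>
      (1 - b) * (∑ n ∈ Finset.range N, qPoch ((a*t/b)*q) q n / qPoch (t*q) q n * b ^ n)
        + qPoch ((a*t/b)*q) q N * b ^ N / qPoch (t*q) q N
          * ((1 - t*q^N) * fineF a b (t*q^N) q))
      Filter.atTop (nhds ((1 - b) * fineF (a*t/b) t b q + 0)) :=
    (hS2.const_mul (1 - b)).add hE0
  have hconst : (1 - t) * fineF a b t q = (1 - b) * fineF (a*t/b) t b q := by
    have h1 : Filter.Tendsto (fun _ : ℕ => (1 - t) * fineF a b t q) Filter.atTop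
        (nhds ((1 - t) * fineF a b t q)) := tendsto_const_nhds
    have h2 := hfinal.congr (fun N => (hiter N).symm)
    have := tendsto_nhds_unique h1 h2
    rw [this, add_zero]
  have htne : (1:ℂ) - t ≠ 0 := sub_ne_zero.mpr (fun h => ht1 h.symm)
  rw [div_mul_eq_mul_div, eq_div_iff htne]
  linear_combination hconst
end

section
/- Rogers–Fine type identity: (1−t)·F(0,b;t;q) = Σ_{n≥0} (bt)^n q^{n²} / ((bq;q)_n (tq;q)_n), where F(0,b;t;q) = Σ_{n≥0} t^n/(bq;q)_n, valid for |q|<1, |t|<1 and bq^m ≠ 1, tq^m ≠ 1 for all m ≥ 1. -/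
open Complex Filter Topology

lemma qPoch_succ (a q : ℂ) (n : ℕ) :
    qPoch a q (n + 1) = qPoch a q n * (1 - a * q ^ n) := by
  simp [qPoch, Finset.prod_range_succ]

lemma qPoch_succ' (a q : ℂ) (n : ℕ) :
    qPoch a q (n + 1) = (1 - a) * qPoch (a * q) q n := by
  rw [qPoch, Finset.prod_range_succ', pow_zero, mul_one, mul_comm]
  congr 1
  apply Finset.prod_congr rfl
  intro j _
  ring

lemma one_sub_sum_le_prod (x : ℕ → ℝ) (h0 : ∀ j, 0 ≤ x j) (h1 : ∀ j, x j ≤ 1) (n : ℕ) :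
    1 - ∑ j ∈ Finset.range n, x j ≤ ∏ j ∈ Finset.range n, (1 - x j) := by
  induction n with
  | zero => simp
  | succ n ih =>
    rw [Finset.prod_range_succ, Finset.sum_range_succ]
    have hp : 0 ≤ ∏ j ∈ Finset.range n, (1 - x j) :=
      Finset.prod_nonneg fun j _ => by linarith [h1 j]
    have hs : 0 ≤ ∑ j ∈ Finset.range n, x j :=
      Finset.sum_nonneg fun j _ => h0 j
    nlinarith [h0 n, h1 n]

lemma qPoch_norm_ge (a q : ℂ) (hq0 : 0 ≤ ‖q‖) (hq1 : ‖q‖ < 1)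
    (ha : ‖a‖ / (1 - ‖q‖) ≤ 1/2) (n : ℕ) :
    (1:ℝ)/2 ≤ ‖qPoch a q n‖ := by
  have hq' : (0:ℝ) < 1 - ‖q‖ := by linarith
  have ha' : ‖a‖ ≤ (1 - ‖q‖)/2 := by
    rw [div_le_iff₀ hq'] at ha; linarith
  set x : ℕ → ℝ := fun j => ‖a‖ * ‖q‖ ^ j with hx
  have hx0 : ∀ j, 0 ≤ x j := fun j => by positivity
  have hx1 : ∀ j, x j ≤ 1 := by
    intro j
    show ‖a‖ * ‖q‖ ^ j ≤ 1
    have h1 : ‖q‖ ^ j ≤ 1 := pow_le_one₀ hq0 hq1.le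
    have h2 := norm_nonneg a
    nlinarith
  have hsum : ∑ j ∈ Finset.range n, x j ≤ 1/2 := by
    have hgeo : ∑ j ∈ Finset.range n, ‖q‖ ^ j ≤ (1 - ‖q‖)⁻¹ := by
      have h1 := Summable.sum_le_tsum (Finset.range n)
        (fun j _ => pow_nonneg hq0 j) (summable_geometric_of_lt_one hq0 hq1)
      rw [tsum_geometric_of_lt_one hq0 hq1] at h1
      exact h1
    have he : ∑ j ∈ Finset.range n, x j = ‖a‖ * ∑ j ∈ Finset.range n, ‖q‖ ^ j := by
      rw [Finset.mul_sum]
    rw [he]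
    calc ‖a‖ * ∑ j ∈ Finset.range n, ‖q‖ ^ j ≤ ‖a‖ * (1 - ‖q‖)⁻¹ :=
          mul_le_mul_of_nonneg_left hgeo (norm_nonneg a)
      _ = ‖a‖ / (1 - ‖q‖) := by rw [div_eq_mul_inv]
      _ ≤ 1/2 := ha
  have hnorm : ∏ j ∈ Finset.range n, (1 - x j) ≤ ‖qPoch a q n‖ := by
    rw [qPoch, norm_prod]
    apply Finset.prod_le_prod
    · intro j _; linarith [hx1 j]
    · intro j _
      have h1 : ‖a * q ^ j‖ = x j := by
        rw [norm_mul, norm_pow]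
      calc 1 - x j = 1 - ‖a * q ^ j‖ := by rw [h1]
        _ ≤ ‖1 - a * q ^ j‖ := by
            have := norm_sub_norm_le (1 : ℂ) (a * q ^ j)
            simpa using this
  calc (1:ℝ)/2 ≤ 1 - ∑ j ∈ Finset.range n, x j := by linarith
    _ ≤ ∏ j ∈ Finset.range n, (1 - x j) := one_sub_sum_le_prod x hx0 hx1 n
    _ ≤ ‖qPoch a q n‖ := hnorm

lemma summable_F (q b t : ℂ) (hq1 : ‖q‖ < 1) (ht : ‖t‖ < 1)
    (hb : ∀ j : ℕ, 1 - b * q * q ^ j ≠ 0) :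
    Summable (fun n : ℕ => t ^ n / qPoch (b * q) q n) := by
  have hP : ∀ n, qPoch (b * q) q n ≠ 0 := by
    intro n
    rw [qPoch, Finset.prod_ne_zero_iff]
    exact fun j _ => hb j
  apply summable_of_ratio_norm_eventually_le (r := (1 + ‖t‖)/2)
  · linarith
  · have h0 : Tendsto (fun n : ℕ => b * q * q ^ n) atTop (𝓝 0) := by
      have := (tendsto_pow_atTop_nhds_zero_of_norm_lt_one hq1).const_mul (b * q)
      simpa using this
    have hev : ∀ᶠ n : ℕ in atTop, ‖b * q * q ^ n‖ < (1 - ‖t‖)/2 :=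
      (NormedAddCommGroup.tendsto_nhds_zero.mp h0) _ (by linarith)
    filter_upwards [hev] with n hn
    have hZ : ‖1 - b * q * q ^ n‖ ≥ (1 + ‖t‖)/2 := by
      have := norm_sub_norm_le (1 : ℂ) (b * q * q ^ n)
      simp only [norm_one] at this
      linarith
    have hZ0 : (0:ℝ) < ‖1 - b * q * q ^ n‖ := by
      have : (0:ℝ) < (1 + ‖t‖)/2 := by positivity
      linarith
    have heq : ‖t ^ (n+1) / qPoch (b*q) q (n+1)‖
        = ‖t‖ / ‖1 - b * q * q ^ n‖ * ‖t ^ n / qPoch (b*q) q n‖ := by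
      rw [qPoch_succ, pow_succ, norm_div, norm_div, norm_mul, norm_mul]
      ring
    rw [heq]
    apply mul_le_mul_of_nonneg_right _ (norm_nonneg _)
    rw [div_le_iff₀ hZ0]
    nlinarith [norm_nonneg t]

lemma FE (q b t : ℂ) (hq1 : ‖q‖ < 1) (ht : ‖t‖ < 1)
    (hb : ∀ j : ℕ, 1 - b * q * q ^ j ≠ 0) :
    (1 - t) * ∑' n : ℕ, t ^ n / qPoch (b * q) q n
      = 1 + b * t * q / (1 - b * q) * ∑' n : ℕ, (t * q) ^ n / qPoch (b * q * q) q n := by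
  have hq0 : (0:ℝ) ≤ ‖q‖ := norm_nonneg q
  have hb' : ∀ j : ℕ, 1 - (b * q) * q * q ^ j ≠ 0 := by
    intro j
    have := hb (j + 1)
    rw [show b * q * q ^ (j+1) = b * q * q * q ^ j by ring] at this
    exact this
  have htq : ‖t * q‖ < 1 := by
    rw [norm_mul]
    nlinarith [norm_nonneg t, norm_nonneg q]
  have h1 : Summable (fun n : ℕ => t ^ n / qPoch (b * q) q n) := summable_F q b t hq1 ht hb
  have hP : ∀ n, qPoch (b * q) q n ≠ 0 := by
    intro n; rw [qPoch, Finset.prod_ne_zero_iff]; exact fun j _ => hb j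
  have hQ : ∀ n, qPoch (b * q * q) q n ≠ 0 := by
    intro n; rw [qPoch, Finset.prod_ne_zero_iff]
    exact fun j _ => hb' j
  have hbq : 1 - b * q ≠ 0 := by simpa using hb 0
  set f : ℕ → ℂ := fun n => t ^ n / qPoch (b * q) q n with hf
  have key : ∀ n : ℕ, f (n + 1) - t * f n
      = b * t * q / (1 - b * q) * ((t * q) ^ n / qPoch (b * q * q) q n) := by
    intro n
    show t ^ (n+1) / qPoch (b * q) q (n+1) - t * (t ^ n / qPoch (b * q) q n)
      = b * t * q / (1 - b * q) * ((t * q) ^ n / qPoch (b * q * q) q n)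
    have e3 : qPoch (b * q * q) q n
        = qPoch (b * q) q n * (1 - (b * q) * q ^ n) / (1 - b * q) := by
      rw [eq_div_iff hbq, mul_comm _ (1 - b * q), ← qPoch_succ', qPoch_succ]
    have hZ : 1 - b * q * q ^ n ≠ 0 := hb n
    rw [qPoch_succ, e3]
    field_simp [hP n, hZ, hbq]
    ring
  have hA : Summable (fun n => f (n + 1)) := (summable_nat_add_iff 1).mpr h1
  have hB : Summable (fun n => t * f n) := h1.mul_left t
  have split : ∑' n : ℕ, f n = f 0 + ∑' n : ℕ, f (n + 1) := Summable.tsum_eq_zero_add h1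
  have hf0 : f 0 = 1 := by simp [hf, qPoch]
  have expand : (1 - t) * ∑' n : ℕ, f n
      = (f 0 + ∑' n : ℕ, f (n + 1)) - ∑' n : ℕ, t * f n := by
    rw [tsum_mul_left, ← split]; ring
  rw [expand, hf0, add_sub_assoc, ← Summable.tsum_sub hA hB, tsum_congr key, tsum_mul_left]

noncomputable def Sf (q b t : ℂ) (k : ℕ) : ℂ :=
  ∑' n : ℕ, (t * q ^ k) ^ n / qPoch (b * q ^ k * q) q n

noncomputable def Rf (q b t : ℂ) (k : ℕ) : ℂ := (1 - t * q ^ k) * Sf q b t k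

noncomputable def cf (q b t : ℂ) (k : ℕ) : ℂ :=
  (b * t) ^ k * q ^ (k ^ 2) / (qPoch (b * q) q k * qPoch (t * q) q k)

noncomputable def df (q b t : ℂ) (k : ℕ) : ℂ :=
  b * t * q ^ (2 * k + 1) / ((1 - b * q ^ (k + 1)) * (1 - t * q ^ (k + 1)))

lemma Rf_succ (q b t : ℂ) (hq1 : ‖q‖ < 1) (ht : ‖t‖ < 1)
    (hb1 : ∀ m : ℕ, 1 ≤ m → 1 - b * q ^ m ≠ 0)
    (ht1 : ∀ m : ℕ, 1 ≤ m → 1 - t * q ^ m ≠ 0) (k : ℕ) :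
    Rf q b t k = 1 + df q b t k * Rf q b t (k + 1) := by
  have hqn : (0:ℝ) ≤ ‖q‖ := norm_nonneg q
  have htk : ‖t * q ^ k‖ < 1 := by
    rw [norm_mul, norm_pow]
    have h1 : ‖q‖ ^ k ≤ 1 := pow_le_one₀ hqn hq1.le
    nlinarith [norm_nonneg t]
  have hbk : ∀ j : ℕ, 1 - b * q ^ k * q * q ^ j ≠ 0 := by
    intro j
    have := hb1 (k + j + 1) (by omega)
    rw [show b * q ^ (k + j + 1) = b * q ^ k * q * q ^ j by ring] at this
    exact this
  have hFE := FE q (b * q ^ k) (t * q ^ k) hq1 htk hbk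
  rw [show t * q ^ k * q = t * q ^ (k+1) by ring,
      show b * q ^ k * q * q = b * q ^ (k+1) * q by ring] at hFE
  have h0 : Rf q b t k
      = 1 + b * q ^ k * (t * q ^ k) * q / (1 - b * q ^ k * q) * Sf q b t (k + 1) := hFE
  rw [h0]
  congr 1
  have hzt : 1 - t * q ^ (k+1) ≠ 0 := ht1 (k+1) (by omega)
  have hzb : 1 - b * q ^ (k+1) ≠ 0 := hb1 (k+1) (by omega)
  have hzb' : 1 - b * q ^ k * q ≠ 0 := by
    rw [show b * q ^ k * q = b * q ^ (k+1) by ring]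
    exact hzb
  have hcoef : b * q ^ k * (t * q ^ k) * q / (1 - b * q ^ k * q)
      = df q b t k * (1 - t * q ^ (k+1)) := by
    unfold df
    field_simp [hzb, hzt, hzb']
    ring
  show b * q ^ k * (t * q ^ k) * q / (1 - b * q ^ k * q) * Sf q b t (k + 1)
      = df q b t k * ((1 - t * q ^ (k+1)) * Sf q b t (k + 1))
  rw [hcoef]
  ring

lemma cf_succ (q b t : ℂ) (hb1 : ∀ m : ℕ, 1 ≤ m → 1 - b * q ^ m ≠ 0)
    (ht1 : ∀ m : ℕ, 1 ≤ m → 1 - t * q ^ m ≠ 0) (k : ℕ) :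
    cf q b t (k + 1) = cf q b t k * df q b t k := by
  have hPb : qPoch (b * q) q k ≠ 0 := by
    rw [qPoch, Finset.prod_ne_zero_iff]
    intro j _
    have := hb1 (j + 1) (by omega)
    rw [show b * q ^ (j+1) = b * q * q ^ j by ring] at this
    exact this
  have hPt : qPoch (t * q) q k ≠ 0 := by
    rw [qPoch, Finset.prod_ne_zero_iff]
    intro j _
    have := ht1 (j + 1) (by omega)
    rw [show t * q ^ (j+1) = t * q * q ^ j by ring] at this
    exact this
  have hzb : 1 - b * q ^ (k+1) ≠ 0 := hb1 (k+1) (by omega)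
  have hzt : 1 - t * q ^ (k+1) ≠ 0 := ht1 (k+1) (by omega)
  unfold cf df
  rw [show (k+1)^2 = k^2 + (2*k+1) by ring, pow_add, qPoch_succ, qPoch_succ,
      show 1 - b * q * q ^ k = 1 - b * q ^ (k+1) by ring,
      show 1 - t * q * q ^ k = 1 - t * q ^ (k+1) by ring]
  field_simp [hPb, hPt, hzb, hzt]
  ring


/-- Rogers–Fine type identity (Fine's (12.3)):
`(1−t)·F(0,b;t;q) = Σ_{n≥0} (bt)^n q^{n²}/((bq;q)_n (tq;q)_n)`. -/
theorem rogers_fine (q b t : ℂ) (hq0 : 0 < ‖q‖) (hq1 : ‖q‖ < 1) (ht : ‖t‖ < 1)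
    (hb : ∀ m : ℕ, 1 ≤ m → b * q ^ m ≠ 1)
    (htq : ∀ m : ℕ, 1 ≤ m → t * q ^ m ≠ 1) :
    (1 - t) * ∑' n : ℕ, t ^ n / qPoch (b * q) q n
      = ∑' n : ℕ, (b * t) ^ n * q ^ (n ^ 2) /
          (qPoch (b * q) q n * qPoch (t * q) q n) := by
  have hqn : (0:ℝ) ≤ ‖q‖ := norm_nonneg q
  have hb1 : ∀ m : ℕ, 1 ≤ m → 1 - b * q ^ m ≠ 0 :=
    fun m hm => sub_ne_zero.mpr (Ne.symm (hb m hm))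
  have ht1 : ∀ m : ℕ, 1 ≤ m → 1 - t * q ^ m ≠ 0 :=
    fun m hm => sub_ne_zero.mpr (Ne.symm (htq m hm))
  -- the iteration identity
  have claim : ∀ N : ℕ, Rf q b t 0
      = (∑ k ∈ Finset.range N, cf q b t k) + cf q b t N * Rf q b t N := by
    intro N
    induction N with
    | zero =>
      have hc0 : cf q b t 0 = 1 := by simp [cf, qPoch]
      simp [hc0]
    | succ N ih =>
      rw [ih, Rf_succ q b t hq1 ht hb1 ht1 N, Finset.sum_range_succ,
        cf_succ q b t hb1 ht1 N]
      ring
  -- summability of cf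
  have hdlim : Tendsto (fun k : ℕ => df q b t k) atTop (𝓝 0) := by
    have hq2 : ‖q ^ 2‖ < 1 := by
      rw [norm_pow]
      nlinarith
    have hnum : Tendsto (fun k : ℕ => b * t * q ^ (2 * k + 1)) atTop (𝓝 0) := by
      have h := (tendsto_pow_atTop_nhds_zero_of_norm_lt_one hq2).const_mul (b * t * q)
      rw [mul_zero] at h
      apply h.congr
      intro k
      rw [pow_add, pow_mul, pow_one]
      ring
    have hqk : Tendsto (fun k : ℕ => q ^ (k + 1)) atTop (𝓝 0) := by
      have h := (tendsto_pow_atTop_nhds_zero_of_norm_lt_one hq1).mul_const q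
      rw [zero_mul] at h
      apply h.congr
      intro k
      rw [pow_succ]
    have hden : Tendsto (fun k : ℕ => (1 - b * q ^ (k + 1)) * (1 - t * q ^ (k + 1)))
        atTop (𝓝 ((1 - b * 0) * (1 - t * 0))) :=
      ((tendsto_const_nhds.sub ((hqk.const_mul b))).mul
        (tendsto_const_nhds.sub ((hqk.const_mul t))))
    simp only [mul_zero, sub_zero, mul_one] at hden
    have := hnum.div hden one_ne_zero
    rw [zero_div] at this; exact this
  have hdev : ∀ᶠ k : ℕ in atTop, ‖df q b t k‖ < 1/2 :=
    (NormedAddCommGroup.tendsto_nhds_zero.mp hdlim) _ (by norm_num)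
  have hcsum : Summable (cf q b t) := by
    apply summable_of_ratio_norm_eventually_le (r := 1/2) (by norm_num)
    filter_upwards [hdev] with k hk
    rw [cf_succ q b t hb1 ht1 k, norm_mul]
    calc ‖cf q b t k‖ * ‖df q b t k‖ ≤ ‖cf q b t k‖ * (1/2) :=
          mul_le_mul_of_nonneg_left hk.le (norm_nonneg _)
      _ = 1/2 * ‖cf q b t k‖ := by ring
  -- eventual bound on Rf
  have hRbound : ∀ᶠ N : ℕ in atTop, ‖Rf q b t N‖ ≤ 4 * (1 - ‖t‖)⁻¹ := by
    have hsmall : Tendsto (fun N : ℕ => b * q ^ N * q) atTop (𝓝 0) := by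
      have h := ((tendsto_pow_atTop_nhds_zero_of_norm_lt_one hq1).const_mul b).mul_const q
      simpa using h
    have hev : ∀ᶠ N : ℕ in atTop, ‖b * q ^ N * q‖ < (1 - ‖q‖)/2 :=
      (NormedAddCommGroup.tendsto_nhds_zero.mp hsmall) _ (by linarith)
    filter_upwards [hev] with N hN
    have hPlow : ∀ n : ℕ, (1:ℝ)/2 ≤ ‖qPoch (b * q ^ N * q) q n‖ := by
      apply qPoch_norm_ge _ _ hqn hq1
      rw [div_le_iff₀ (by linarith : (0:ℝ) < 1 - ‖q‖)]
      linarith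
    have hterm : ∀ n : ℕ, ‖(t * q ^ N) ^ n / qPoch (b * q ^ N * q) q n‖ ≤ 2 * ‖t‖ ^ n := by
      intro n
      rw [norm_div, norm_pow]
      have h1 : ‖t * q ^ N‖ ^ n ≤ ‖t‖ ^ n := by
        apply pow_le_pow_left₀ (norm_nonneg _)
        rw [norm_mul, norm_pow]
        have : ‖q‖ ^ N ≤ 1 := pow_le_one₀ hqn hq1.le
        nlinarith [norm_nonneg t]
      calc ‖t * q ^ N‖ ^ n / ‖qPoch (b * q ^ N * q) q n‖ ≤ ‖t‖ ^ n / (1/2) := by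
            apply div_le_div₀ (by positivity) h1 (by norm_num) (hPlow n)
        _ = 2 * ‖t‖ ^ n := by ring
    have hgsum : Summable (fun n : ℕ => 2 * ‖t‖ ^ n) :=
      (summable_geometric_of_lt_one (norm_nonneg t) ht).mul_left 2
    have hnormsum : Summable (fun n : ℕ => ‖(t * q ^ N) ^ n / qPoch (b * q ^ N * q) q n‖) :=
      Summable.of_nonneg_of_le (fun n => norm_nonneg _) hterm hgsum
    have hS : ‖Sf q b t N‖ ≤ 2 * (1 - ‖t‖)⁻¹ := by
      calc ‖Sf q b t N‖ ≤ ∑' n : ℕ, ‖(t * q ^ N) ^ n / qPoch (b * q ^ N * q) q n‖ :=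
            norm_tsum_le_tsum_norm hnormsum
        _ ≤ ∑' n : ℕ, 2 * ‖t‖ ^ n := Summable.tsum_le_tsum hterm hnormsum hgsum
        _ = 2 * (1 - ‖t‖)⁻¹ := by
            rw [tsum_mul_left, tsum_geometric_of_lt_one (norm_nonneg t) ht]
    have h1tq : ‖(1 : ℂ) - t * q ^ N‖ ≤ 2 := by
      calc ‖(1 : ℂ) - t * q ^ N‖ ≤ ‖(1:ℂ)‖ + ‖t * q ^ N‖ := norm_sub_le _ _
        _ ≤ 1 + ‖t‖ := by
            rw [norm_one, norm_mul, norm_pow]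
            have : ‖q‖ ^ N ≤ 1 := pow_le_one₀ hqn hq1.le
            nlinarith [norm_nonneg t]
        _ ≤ 2 := by linarith
    have hS0 : (0:ℝ) ≤ ‖Sf q b t N‖ := norm_nonneg _
    calc ‖Rf q b t N‖ = ‖(1 : ℂ) - t * q ^ N‖ * ‖Sf q b t N‖ := by
          rw [Rf, norm_mul]
      _ ≤ 2 * (2 * (1 - ‖t‖)⁻¹) := by
          apply mul_le_mul h1tq hS hS0 (by norm_num)
      _ = 4 * (1 - ‖t‖)⁻¹ := by ring
  -- tail tends to zero
  have htail : Tendsto (fun N : ℕ => cf q b t N * Rf q b t N) atTop (𝓝 0) := by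
    apply squeeze_zero_norm' (a := fun N => ‖cf q b t N‖ * (4 * (1 - ‖t‖)⁻¹))
    · filter_upwards [hRbound] with N hN
      rw [norm_mul]
      exact mul_le_mul_of_nonneg_left hN (norm_nonneg _)
    · have hc0 : Tendsto (fun N : ℕ => ‖cf q b t N‖) atTop (𝓝 0) :=
        tendsto_zero_iff_norm_tendsto_zero.mp hcsum.tendsto_atTop_zero
      have := hc0.mul_const (4 * (1 - ‖t‖)⁻¹)
      simpa using this
  -- conclude
  have hpart : Tendsto (fun N : ℕ => ∑ k ∈ Finset.range N, cf q b t k)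
      atTop (𝓝 (∑' k : ℕ, cf q b t k)) := hcsum.hasSum.tendsto_sum_nat
  have hcomb : Tendsto (fun N : ℕ => (∑ k ∈ Finset.range N, cf q b t k)
      + cf q b t N * Rf q b t N) atTop (𝓝 (∑' k : ℕ, cf q b t k + 0)) :=
    hpart.add htail
  have hconst : (fun N : ℕ => (∑ k ∈ Finset.range N, cf q b t k)
      + cf q b t N * Rf q b t N) = fun _ => Rf q b t 0 :=
    funext fun N => (claim N).symm
  rw [hconst] at hcomb
  have hR0 : Rf q b t 0 = ∑' k : ℕ, cf q b t k := by
    have := tendsto_nhds_unique hcomb tendsto_const_nhds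
    rw [add_zero] at this
    exact this.symm
  have hL : (1 - t) * ∑' n : ℕ, t ^ n / qPoch (b * q) q n = Rf q b t 0 := by
    rw [Rf, Sf]
    simp
  rw [hL, hR0]
  rfl
end
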